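/- Let α₀ be a unit of R such that x^n − α₀ is basic irreducible over R, let α = α₀^{p^s}, write f = x^n − α₀, and let K = R[x]/⟨x^{np^s} − α⟩. Then: (a) if C = ⟨γ f^τ⟩ with 0 ≤ τ < p^s, then the RT distance of C equals nτ + 1; (b) if C = ⟨f^ω + γ f^t G⟩ with 0 < ω < p^s, G either 0 or a unit of K, and 0 ≤ t < ω when G ≠ 0, then the RT distance of C equals nκ + 1, where κ is the least nonnegative integer such that γ f^κ ∈ C; (c) if C = ⟨f^ω + γ f^t G, γ f^μ⟩ with 0 ≤ μ < ω < p^s, G either 0 or a unit of K, 0 ≤ t < μ when G ≠ 0, and μ < κ, where κ is the least nonnegative integer such that γ f^κ ∈ ⟨f^ω + γ f^t G⟩, then the RT distance of C equals nμ + 1. -/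

import Mathlib

open Polynomial

/-- The unique representative of degree `< deg q` of an element of `A[x]/⟨q⟩`
(for `q` monic). -/
noncomputable def polyRep {A : Type} [CommRing A] (q : A[X]) (c : A[X] ⧸ Ideal.span {q}) :
    A[X] :=
  Function.surjInv Ideal.Quotient.mk_surjective c %ₘ q

open Classical in
/-- RT (Rosenbloom–Tsfasman) weight of a codeword: `1 + deg` of its representative,
and `0` for the zero codeword. -/
noncomputable def wRT {A : Type} [CommRing A] (q : A[X]) (c : A[X] ⧸ Ideal.span {q}) : ℕ :=
  if c = 0 then 0 else (polyRep q c).natDegree + 1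

/-- RT distance of a code (an ideal of `A[x]/⟨q⟩`); `0` for the zero code. -/
noncomputable def dRT {A : Type} [CommRing A] (q : A[X])
    (I : Ideal (A[X] ⧸ Ideal.span {q})) : ℕ :=
  sInf {w : ℕ | ∃ c ∈ I, c ≠ 0 ∧ w = wRT q c}


set_option linter.unusedSectionVars false
set_option linter.unusedVariables false
set_option linter.unnecessarySimpa false
set_option maxHeartbeats 1000000

namespace Stmt14
variable {R : Type} [CommRing R]

theorem gamma_not_unit {γ : R} (hγ : γ ≠ 0) (hγ2 : γ^2 = 0) : ¬ IsUnit γ := by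
  intro h
  exact hγ (by simpa [pow_two] using (h.mul_right_cancel (by simpa [pow_two] using hγ2 : γ * γ = 0 * γ)))

theorem maximal {γ : R} (hγ : γ ≠ 0) (hγ2 : γ^2 = 0)
    (hmax : ∀ a : R, a ∈ Ideal.span {γ} ↔ ¬ IsUnit a) :
    (Ideal.span {γ}).IsMaximal := by
  rw [Ideal.isMaximal_iff]
  constructor
  · intro h1
    exact (hmax 1).1 h1 isUnit_one
  · intro J a hIJ haI haJ
    have : IsUnit a := by
      by_contra h
      exact haI ((hmax a).2 h)
    obtain ⟨u, rfl⟩ := this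
    exact J.eq_top_of_isUnit_mem haJ u.isUnit ▸ (by simpa using J.mul_mem_left (↑u⁻¹) haJ)


section Fin
variable [Finite R]
theorem charp {γ : R} (p m : ℕ) (hp : p.Prime) (hm : 0 < m)
    (hmax : ∀ a : R, a ∈ Ideal.span {γ} ↔ ¬ IsUnit a)
    (hres : Nat.card (R ⧸ Ideal.span {γ}) = p ^ m) :
    CharP (R ⧸ Ideal.span {γ}) p := by
  haveI : Finite (R ⧸ Ideal.span {γ}) :=
    Finite.of_surjective _ Ideal.Quotient.mk_surjective
  letI : Fintype (R ⧸ Ideal.span {γ}) := Fintype.ofFinite _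
  set F := R ⧸ Ideal.span {γ} with hF
  haveI : Nontrivial F := by
    rw [← Fintype.one_lt_card_iff_nontrivial, ← Nat.card_eq_fintype_card, hres]
    exact Nat.one_lt_pow hm.ne' hp.one_lt
  have hpm : ((p : F)) ^ m = 0 := by
    have h1 : ((Nat.card F : F)) = 0 := by
      rw [Nat.card_eq_fintype_card]; exact Nat.cast_card_eq_zero F
    rw [hres] at h1; push_cast at h1; exact h1
  have hp0 : (p : F) = 0 := by
    have hnu : ¬ IsUnit ((p : R)) := by
      intro hu
      have : IsUnit ((p : F)) := by
        have := hu.map (Ideal.Quotient.mk (Ideal.span {γ}))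
        simpa using this
      have := (this.pow m)
      rw [hpm] at this
      rw [isUnit_zero_iff] at this
      exact zero_ne_one this
    have : ((p:R) : F) = 0 := Ideal.Quotient.eq_zero_iff_mem.2 ((hmax _).2 hnu)
    simpa using this
  have hdvd : ringChar F ∣ p := ringChar.dvd hp0
  rcases (Nat.Prime.eq_one_or_self_of_dvd hp _ hdvd) with h1 | h1
  · exact absurd h1 (CharP.ringChar_ne_one)
  · exact ringChar.of_eq h1

end Fin

theorem map_eq_zero_iff (γ : R) (a : R[X]) :
    a.map (Ideal.Quotient.mk (Ideal.span {γ})) = 0 ↔ C γ ∣ a := by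
  constructor
  · intro h
    have : a ∈ RingHom.ker (mapRingHom (Ideal.Quotient.mk (Ideal.span {γ}))) := by
      simpa [RingHom.mem_ker] using h
    rw [ker_mapRingHom, Ideal.mk_ker, Ideal.map_span] at this
    simpa [Ideal.mem_span_singleton] using this
  · rintro ⟨b, rfl⟩
    simp [Polynomial.map_mul]

theorem gamma_mul_eq_zero_iff {γ : R} (hγ : γ ≠ 0) (hγ2 : γ ^ 2 = 0)
    (hmax : ∀ a : R, a ∈ Ideal.span {γ} ↔ ¬ IsUnit a) (a : R[X]) :
    C γ * a = 0 ↔ a.map (Ideal.Quotient.mk (Ideal.span {γ})) = 0 := by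
  constructor
  · intro h
    ext i
    simp only [coeff_map, coeff_zero]
    rw [Ideal.Quotient.eq_zero_iff_mem, hmax]
    intro hu
    have hci : γ * a.coeff i = 0 := by
      have := congrArg (fun q => Polynomial.coeff q i) h
      simpa [coeff_C_mul] using this
    apply hγ
    obtain ⟨u, hui⟩ := hu
    have h3 : a.coeff i * ↑u⁻¹ = 1 := by rw [← hui]; exact u.mul_inv
    have h2 : γ * (a.coeff i * ↑u⁻¹) = 0 := by rw [← mul_assoc, hci, zero_mul]
    simpa [h3] using h2
  · intro h
    obtain ⟨b, rfl⟩ := (map_eq_zero_iff γ a).1 h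
    rw [← mul_assoc, ← C_mul, ← pow_two, hγ2, C_0, zero_mul]


theorem frob {R : Type} [CommRing R] (γ : R) (p s n : ℕ) [Fact p.Prime]
    (hchar : CharP (R ⧸ Ideal.span {γ}) p) (α₀ : R) :
    (X ^ (n * p ^ s) - C (α₀ ^ p ^ s) : R[X]).map (Ideal.Quotient.mk (Ideal.span {γ}))
      = ((X ^ n - C α₀ : R[X]).map (Ideal.Quotient.mk (Ideal.span {γ}))) ^ (p ^ s) := by
  haveI := hchar
  rw [Polynomial.map_sub, Polynomial.map_sub, Polynomial.map_pow, Polynomial.map_pow,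
    map_X, map_C, map_C, sub_pow_char_pow, ← pow_mul, map_pow, C_pow]

section Rep
variable {A : Type} [CommRing A] {q : A[X]}

theorem mk_polyRep (hq : q.Monic) (c : A[X] ⧸ Ideal.span {q}) :
    Ideal.Quotient.mk (Ideal.span {q}) (polyRep q c) = c := by
  rw [polyRep, modByMonic_eq_sub_mul_div _ q, map_sub]
  have : Ideal.Quotient.mk (Ideal.span {q}) (q * (Function.surjInv Ideal.Quotient.mk_surjective c /ₘ q)) = 0 := by
    rw [Ideal.Quotient.eq_zero_iff_mem]
    exact Ideal.mul_mem_right _ _ (Ideal.subset_span rfl)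
  rw [this, sub_zero]
  exact Function.surjInv_eq _ c

theorem polyRep_degree_lt [Nontrivial A] (hq : q.Monic) (c : A[X] ⧸ Ideal.span {q}) :
    (polyRep q c).degree < q.degree :=
  degree_modByMonic_lt _ hq

theorem polyRep_mk [Nontrivial A] (hq : q.Monic) {r : A[X]} (hr : r.degree < q.degree) :
    polyRep q (Ideal.Quotient.mk (Ideal.span {q}) r) = r := by
  rw [polyRep]
  have hd : q ∣ (Function.surjInv (Ideal.Quotient.mk_surjective
      (I := Ideal.span {q})) (Ideal.Quotient.mk (Ideal.span {q}) r)) - r := by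
    have h0 := Function.surjInv_eq (Ideal.Quotient.mk_surjective
      (I := Ideal.span {q})) (Ideal.Quotient.mk (Ideal.span {q}) r)
    rw [← Ideal.mem_span_singleton, ← Ideal.Quotient.eq_zero_iff_mem, map_sub, h0, sub_self]
  obtain ⟨k, hk⟩ := hd
  have : Function.surjInv (Ideal.Quotient.mk_surjective
      (I := Ideal.span {q})) (Ideal.Quotient.mk (Ideal.span {q}) r) = r + q * k := by
    rw [← hk]; ring
  rw [this, add_modByMonic, self_mul_modByMonic hq, add_zero]
  exact (modByMonic_eq_self_iff hq).2 hr

/-- monic divisor of a nonzero polynomial has smaller degree (no domain needed) -/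
theorem degree_le_of_monic_dvd (hq : q.Monic) {r : A[X]} (hr : r ≠ 0) (h : q ∣ r) :
    q.degree ≤ r.degree := by
  obtain ⟨k, rfl⟩ := h
  have hk : k ≠ 0 := by rintro rfl; simp at hr
  rw [mul_comm, hq.degree_mul]
  calc q.degree = 0 + q.degree := by rw [zero_add]
    _ ≤ k.degree + q.degree := by
        gcongr
        exact zero_le_degree_iff.mpr hk

theorem mk_ne_zero_of_degree_lt (hq : q.Monic) {r : A[X]} (hr : r ≠ 0)
    (hdeg : r.degree < q.degree) :
    Ideal.Quotient.mk (Ideal.span {q}) r ≠ 0 := by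
  intro h
  rw [Ideal.Quotient.eq_zero_iff_mem, Ideal.mem_span_singleton] at h
  exact absurd (degree_le_of_monic_dvd hq hr h) (not_le.2 hdeg)

theorem wRT_mk [Nontrivial A] (hq : q.Monic) {r : A[X]} (hr : r ≠ 0)
    (hdeg : r.degree < q.degree) :
    wRT q (Ideal.Quotient.mk (Ideal.span {q}) r) = r.natDegree + 1 := by
  rw [wRT, if_neg (mk_ne_zero_of_degree_lt hq hr hdeg), polyRep_mk hq hdeg]

end Rep

section CoreA
variable {F : Type} [Field F]

/-- the ideal of `b` with `γ·b ∈ C`. -/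
def DId (γ : R) (q : R[X]) (Cc : Ideal (R[X] ⧸ Ideal.span {q})) : Ideal R[X] where
  carrier := {b | Ideal.Quotient.mk (Ideal.span {q}) (C γ * b) ∈ Cc}
  add_mem' := by
    intro a b ha hb
    simp only [Set.mem_setOf_eq, mul_add, map_add] at *
    exact Cc.add_mem ha hb
  zero_mem' := by simp
  smul_mem' := by
    intro c b hb
    simp only [Set.mem_setOf_eq, smul_eq_mul] at *
    have : C γ * (c * b) = c * (C γ * b) := by ring
    rw [this, map_mul]
    exact Cc.mul_mem_left _ hb

theorem mem_DId {γ : R} {q : R[X]} {Cc : Ideal (R[X] ⧸ Ideal.span {q})} {b : R[X]} :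
    b ∈ DId γ q Cc ↔ Ideal.Quotient.mk (Ideal.span {q}) (C γ * b) ∈ Cc := Iff.rfl

/-- its image in `F[X]`. -/
noncomputable def TId (πR : R →+* F) (γ : R) (q : R[X]) (Cc : Ideal (R[X] ⧸ Ideal.span {q})) :
    Ideal F[X] :=
  (DId γ q Cc).map (mapRingHom πR)

section Core
variable {πR : R →+* F} {γ : R} {q : R[X]}
variable (hsurj : Function.Surjective πR)
variable (hker : ∀ a : R[X], a.map πR = 0 ↔ C γ ∣ a)
variable (hγker : ∀ a : R[X], C γ * a = 0 ↔ a.map πR = 0)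

include hker hγker

theorem gamma_sq : (C γ : R[X]) * C γ = 0 := by
  rw [hγker]
  have : (C γ : R[X]).map πR = 0 ↔ C γ ∣ C γ := hker _
  exact this.2 dvd_rfl

theorem gamma_ne (hb : (1:F) ≠ 0) : γ ≠ 0 := by
  intro h
  have : (C γ : R[X]) * 1 = 0 := by rw [h]; simp
  rw [hγker] at this
  simp only [Polynomial.map_one] at this
  exact hb (by simpa using congrArg (fun g => Polynomial.coeff g 0) this)

include hsurj in
theorem mem_TId_map {Cc : Ideal (R[X] ⧸ Ideal.span {q})} (b : R[X]) :
    b.map πR ∈ TId πR γ q Cc ↔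
      Ideal.Quotient.mk (Ideal.span {q}) (C γ * b) ∈ Cc := by
  constructor
  · intro h
    rw [TId, Ideal.mem_map_iff_of_surjective _ (Polynomial.map_surjective πR hsurj)] at h
    obtain ⟨b', hb', hmap⟩ := h
    rw [mem_DId] at hb'
    have hzero : (b - b').map πR = 0 := by
      rw [Polynomial.map_sub]
      rw [show (mapRingHom πR) b' = b'.map πR from rfl] at hmap
      rw [hmap, sub_self]
    obtain ⟨c, hc⟩ := (hker _).1 hzero
    have : C γ * b = C γ * b' := by
      have h2 : C γ * (b - b') = C γ * (C γ * c) := by rw [hc]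
      rw [← mul_assoc, gamma_sq hker hγker, zero_mul, mul_sub, sub_eq_zero] at h2
      exact h2
    rw [this]
    exact hb'
  · intro h
    exact Ideal.mem_map_of_mem _ (mem_DId.2 h)


end Core
end CoreA

section Core2
variable {F : Type} [Field F]
variable {πR : R →+* F} {γ : R} {q : R[X]} {f : R[X]} {e : ℕ}
variable (hsurj : Function.Surjective πR)
variable (hker : ∀ a : R[X], a.map πR = 0 ↔ C γ ∣ a)
variable (hγker : ∀ a : R[X], C γ * a = 0 ↔ a.map πR = 0)
variable (hfrob : q.map πR = (f.map πR) ^ e)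
variable (hirrb : Irreducible (f.map πR))

include hγker hfrob in
theorem key0 : Ideal.Quotient.mk (Ideal.span {q}) (C γ * f ^ e) = 0 := by
  have h1 : (f ^ e - q).map πR = 0 := by
    rw [Polynomial.map_sub, Polynomial.map_pow, hfrob, sub_self]
  have h2 : C γ * (f ^ e - q) = 0 := (hγker _).2 h1
  have h3 : C γ * f ^ e = C γ * q := by
    rw [mul_sub, sub_eq_zero] at h2; exact h2
  have hq0 : Ideal.Quotient.mk (Ideal.span {q}) q = 0 :=
    Ideal.Quotient.eq_zero_iff_mem.2 (Ideal.subset_span (Set.mem_singleton _))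
  rw [h3, map_mul, hq0, mul_zero]

include hsurj hker hγker hfrob hirrb in
theorem TId_ex (Cc : Ideal (R[X] ⧸ Ideal.span {q})) :
    ∃ j ≤ e, TId πR γ q Cc = Ideal.span {(f.map πR) ^ j} := by
  have hmem : (f.map πR) ^ e ∈ TId πR γ q Cc := by
    rw [← Polynomial.map_pow, mem_TId_map hsurj hker hγker, key0 hγker hfrob]
    exact Cc.zero_mem
  obtain ⟨d, hd⟩ := (IsPrincipalIdealRing.principal (TId πR γ q Cc)).principal
  rw [Ideal.submodule_span_eq] at hd
  have hdvd : d ∣ (f.map πR) ^ e := by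
    rw [hd, Ideal.mem_span_singleton] at hmem; exact hmem
  obtain ⟨j, hj, hassoc⟩ := (dvd_prime_pow hirrb.prime e).1 hdvd
  exact ⟨j, hj, by rw [hd, Ideal.span_singleton_eq_span_singleton.2 hassoc]⟩

include hsurj hker hγker hfrob hirrb in
theorem dvd_of_mem_span_gamma {τ : ℕ} (hτ : τ ≤ e) {b c : R[X]}
    (hc : (f.map πR) ^ τ ∣ c.map πR)
    (hb : Ideal.Quotient.mk (Ideal.span {q}) (C γ * b) ∈
      Ideal.span {Ideal.Quotient.mk (Ideal.span {q}) (C γ * c)}) :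
    (f.map πR) ^ τ ∣ b.map πR := by
  rw [Ideal.mem_span_singleton] at hb
  obtain ⟨u, hu⟩ := hb
  obtain ⟨v, rfl⟩ := Ideal.Quotient.mk_surjective u
  have h1 : Ideal.Quotient.mk (Ideal.span {q}) (C γ * b - C γ * c * v) = 0 := by
    rw [map_sub, hu, map_mul, map_mul, map_mul, mul_assoc, sub_self]
  rw [Ideal.Quotient.eq_zero_iff_mem, Ideal.mem_span_singleton] at h1
  obtain ⟨w, hw⟩ := h1
  have hγ0 : (C γ : R[X]).map πR = 0 := (hker _).2 dvd_rfl
  have h2 : (0 : F[X]) = (f.map πR) ^ e * w.map πR := by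
    have h := congrArg (Polynomial.map πR) hw
    simp only [Polynomial.map_sub, Polynomial.map_mul, hγ0, zero_mul, sub_self, hfrob] at h
    exact h
  have h3 : w.map πR = 0 := by
    rcases mul_eq_zero.1 h2.symm with h | h
    · exact absurd h (pow_ne_zero _ hirrb.ne_zero)
    · exact h
  obtain ⟨w', hw'⟩ := (hker _).1 h3
  have h4 : C γ * (b - c * v - q * w') = 0 := by
    have heq : C γ * (b - c * v - q * w') = (C γ * b - C γ * c * v) - q * (C γ * w') := by
      ring
    rw [heq, hw, hw', mul_comm (C γ) w', ← mul_assoc, sub_self]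
  have h5 : (b - c * v - q * w').map πR = 0 := (hγker _).1 h4
  simp only [Polynomial.map_sub, Polynomial.map_mul] at h5
  have h6 : b.map πR = c.map πR * v.map πR + q.map πR * w'.map πR := by
    linear_combination h5
  rw [h6, hfrob]
  exact dvd_add (hc.mul_right _) ((pow_dvd_pow _ hτ).mul_right _)

include hsurj hker hγker hfrob hirrb in
/-- case (a): principal code generated by `γ f^τ`. -/
theorem TId_span_gamma {τ : ℕ} (hτ : τ ≤ e) :
    TId πR γ q (Ideal.span {Ideal.Quotient.mk (Ideal.span {q}) (C γ * f ^ τ)})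
      = Ideal.span {(f.map πR) ^ τ} := by
  apply le_antisymm
  · rw [TId, Ideal.map_le_iff_le_comap]
    intro b hb
    rw [mem_DId] at hb
    rw [Ideal.mem_comap]
    show b.map πR ∈ _
    rw [Ideal.mem_span_singleton]
    exact dvd_of_mem_span_gamma hsurj hker hγker hfrob hirrb hτ
      (by rw [Polynomial.map_pow]) hb
  · rw [Ideal.span_le, Set.singleton_subset_iff]
    rw [← Polynomial.map_pow]
    rw [SetLike.mem_coe, mem_TId_map hsurj hker hγker]
    exact Ideal.mem_span_singleton_self _

include hsurj hker hγker hfrob hirrb in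
theorem TId_span_least {Cc : Ideal (R[X] ⧸ Ideal.span {q})} {κ : ℕ}
    (hκ : IsLeast {k : ℕ | Ideal.Quotient.mk (Ideal.span {q}) (C γ) *
      (Ideal.Quotient.mk (Ideal.span {q}) f) ^ k ∈ Cc} κ) :
    TId πR γ q Cc = Ideal.span {(f.map πR) ^ κ} := by
  have hconv : ∀ k : ℕ, Ideal.Quotient.mk (Ideal.span {q}) (C γ) *
      (Ideal.Quotient.mk (Ideal.span {q}) f) ^ k
      = Ideal.Quotient.mk (Ideal.span {q}) (C γ * f ^ k) := fun k => by
    rw [map_mul, map_pow]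
  obtain ⟨j, hj, hT⟩ := TId_ex hsurj hker hγker hfrob hirrb Cc
  have hjκ : j = κ := by
    have h1 : κ ≤ j := by
      apply hκ.2
      show Ideal.Quotient.mk (Ideal.span {q}) (C γ) *
        (Ideal.Quotient.mk (Ideal.span {q}) f) ^ j ∈ Cc
      rw [hconv]
      rw [← mem_TId_map hsurj hker hγker, Polynomial.map_pow, hT]
      exact Ideal.mem_span_singleton_self _
    have h2 : j ≤ κ := by
      have hmem : (f.map πR) ^ κ ∈ TId πR γ q Cc := by
        rw [← Polynomial.map_pow, mem_TId_map hsurj hker hγker]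
        rw [← hconv]
        exact hκ.1
      rw [hT, Ideal.mem_span_singleton] at hmem
      exact (pow_dvd_pow_iff hirrb.ne_zero hirrb.not_isUnit).1 hmem
    omega
  rw [← hjκ]; exact hT

include hsurj hker hγker hfrob hirrb in
theorem TId_span_pair {g : R[X] ⧸ Ideal.span {q}} {κ μ : ℕ}
    (hκT : TId πR γ q (Ideal.span {g}) = Ideal.span {(f.map πR) ^ κ}) (hμκ : μ ≤ κ) :
    TId πR γ q (Ideal.span {g, Ideal.Quotient.mk (Ideal.span {q}) (C γ * f ^ μ)})
      = Ideal.span {(f.map πR) ^ μ} := by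
  apply le_antisymm
  · rw [TId, Ideal.map_le_iff_le_comap]
    intro b hb
    rw [mem_DId, Ideal.mem_span_pair] at hb
    obtain ⟨a, u, hau⟩ := hb
    obtain ⟨v, rfl⟩ := Ideal.Quotient.mk_surjective u
    have hsub : Ideal.Quotient.mk (Ideal.span {q}) (C γ * (b - v * f ^ μ)) ∈
        Ideal.span {g} := by
      have heq : C γ * (b - v * f ^ μ) = C γ * b - v * (C γ * f ^ μ) := by ring
      have h4 : Ideal.Quotient.mk (Ideal.span {q}) (v * (C γ * f ^ μ))
          = Ideal.Quotient.mk (Ideal.span {q}) v *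
            Ideal.Quotient.mk (Ideal.span {q}) (C γ * f ^ μ) := map_mul _ _ _
      have h2 : Ideal.Quotient.mk (Ideal.span {q}) (C γ * (b - v * f ^ μ)) = a * g := by
        rw [heq, map_sub, h4, ← hau]
        ring
      rw [h2]
      exact Ideal.mul_mem_left _ _ (Ideal.mem_span_singleton_self _)
    have hdvd : (f.map πR) ^ κ ∣ (b - v * f ^ μ).map πR := by
      have h3 : (b - v * f ^ μ).map πR ∈ TId πR γ q (Ideal.span {g}) :=
        (mem_TId_map hsurj hker hγker _).2 hsub
      rw [hκT, Ideal.mem_span_singleton] at h3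
      exact h3
    have hdvdμ : (f.map πR) ^ μ ∣ (b - v * f ^ μ).map πR :=
      (pow_dvd_pow _ hμκ).trans hdvd
    rw [Ideal.mem_comap]
    show b.map πR ∈ _
    rw [Ideal.mem_span_singleton]
    have hb' : b.map πR = (b - v * f ^ μ).map πR + v.map πR * (f.map πR) ^ μ := by
      rw [Polynomial.map_sub, Polynomial.map_mul, Polynomial.map_pow]
      ring
    rw [hb']
    exact dvd_add hdvdμ (dvd_mul_left _ _)
  · rw [Ideal.span_le, Set.singleton_subset_iff, ← Polynomial.map_pow,
      SetLike.mem_coe, mem_TId_map hsurj hker hγker]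
    exact Ideal.subset_span (by simp)

include hsurj hker hγker hfrob hirrb in
theorem master (hq : q.Monic) (hf : f.Monic)
    {Cc : Ideal (R[X] ⧸ Ideal.span {q})} {κ : ℕ} (hκe : κ < e)
    (hTC : TId πR γ q Cc = Ideal.span {(f.map πR) ^ κ}) :
    dRT q Cc = κ * f.natDegree + 1 := by
  haveI : Nontrivial R :=
    ⟨1, 0, fun h => one_ne_zero (α := F) (by rw [← map_one πR, h, map_zero])⟩
  have hγ : γ ≠ 0 := gamma_ne hker hγker one_ne_zero
  have hfb : (f.map πR).Monic := hf.map πR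
  have hndb : (f.map πR).natDegree = f.natDegree := hf.natDegree_map πR
  have hnd : 0 < f.natDegree := by rw [← hndb]; exact hirrb.natDegree_pos
  have hdegq : q.natDegree = e * f.natDegree := by
    have h1 : (q.map πR).natDegree = q.natDegree := hq.natDegree_map πR
    rw [hfrob, Monic.natDegree_pow hfb, hndb] at h1
    exact h1.symm
  have hfκnd : ((f.map πR) ^ κ).natDegree = κ * f.natDegree := by
    rw [Monic.natDegree_pow hfb, hndb]
  have hr₀deg : (C γ * f ^ κ).natDegree = κ * f.natDegree := by
    apply le_antisymm
    · calc (C γ * f ^ κ).natDegree ≤ (C γ).natDegree + (f ^ κ).natDegree :=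
            natDegree_mul_le
        _ = κ * f.natDegree := by rw [natDegree_C, zero_add, Monic.natDegree_pow hf]
    · apply le_natDegree_of_ne_zero
      rw [coeff_C_mul]
      have hco : (f ^ κ).coeff (κ * f.natDegree) = 1 := by
        have h := (hf.pow κ).coeff_natDegree
        rwa [Monic.natDegree_pow hf] at h
      rw [hco, mul_one]; exact hγ
  have hr₀ne : C γ * f ^ κ ≠ 0 := by
    intro h
    have h2 := (hγker (f ^ κ)).1 h
    rw [Polynomial.map_pow] at h2
    exact (pow_ne_zero κ hfb.ne_zero) h2
  have hr₀degq : (C γ * f ^ κ).degree < q.degree := by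
    rw [degree_eq_natDegree hr₀ne, degree_eq_natDegree hq.ne_zero, hr₀deg, hdegq]
    exact_mod_cast Nat.mul_lt_mul_of_pos_right hκe hnd
  have hc₀mem : Ideal.Quotient.mk (Ideal.span {q}) (C γ * f ^ κ) ∈ Cc := by
    rw [← mem_TId_map hsurj hker hγker (f ^ κ), Polynomial.map_pow, hTC]
    exact Ideal.mem_span_singleton_self _
  have hc₀ne := mk_ne_zero_of_degree_lt hq hr₀ne hr₀degq
  -- key lower bound on degrees of nonzero codewords
  have hlow : ∀ c ∈ Cc, c ≠ 0 → κ * f.natDegree ≤ (polyRep q c).natDegree := by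
    intro c hcC hcne
    have hmkr : Ideal.Quotient.mk (Ideal.span {q}) (polyRep q c) = c := mk_polyRep hq c
    set r := polyRep q c with hrdef
    have hrne : r ≠ 0 := by
      intro h; apply hcne; rw [← hmkr, h, map_zero]
    have hdvd : (f.map πR) ^ κ ∣ r.map πR := by
      have hmem2 : Ideal.Quotient.mk (Ideal.span {q}) (C γ * r) ∈ Cc := by
        rw [map_mul, hmkr]; exact Cc.mul_mem_left _ hcC
      rw [← mem_TId_map hsurj hker hγker r, hTC, Ideal.mem_span_singleton] at hmem2
      exact hmem2
    by_cases hr0 : r.map πR = 0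
    · obtain ⟨b, hb⟩ := (hker r).1 hr0
      have hmem3 : Ideal.Quotient.mk (Ideal.span {q}) (C γ * b) ∈ Cc := by
        rw [← hb, hmkr]; exact hcC
      have hdvdb : (f.map πR) ^ κ ∣ b.map πR := by
        rw [← mem_TId_map hsurj hker hγker b, hTC, Ideal.mem_span_singleton] at hmem3
        exact hmem3
      have hbne : b.map πR ≠ 0 := by
        intro h; exact hrne (by rw [hb]; exact (hγker b).2 h)
      have h1 : κ * f.natDegree ≤ (b.map πR).natDegree := by
        have h2 := natDegree_le_natDegree (degree_le_of_dvd hdvdb hbne)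
        rwa [hfκnd] at h2
      have hcoef : πR (b.coeff ((b.map πR).natDegree)) ≠ 0 := by
        have h3 : (b.map πR).coeff ((b.map πR).natDegree) ≠ 0 :=
          leadingCoeff_ne_zero.2 hbne
        rwa [coeff_map] at h3
      have hrc : r.coeff ((b.map πR).natDegree) ≠ 0 := by
        rw [hb, coeff_C_mul]
        intro h
        apply hcoef
        have h4 : C γ * C (b.coeff ((b.map πR).natDegree)) = 0 := by
          rw [← C_mul, h, C_0]
        have h5 := (hγker _).1 h4
        rwa [map_C, C_eq_zero] at h5
      exact h1.trans (le_natDegree_of_ne_zero hrc)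
    · have h1 := natDegree_le_natDegree (degree_le_of_dvd hdvd hr0)
      rw [hfκnd] at h1
      exact h1.trans natDegree_map_le
  apply le_antisymm
  · apply Nat.sInf_le
    exact ⟨_, hc₀mem, hc₀ne, by rw [wRT_mk hq hr₀ne hr₀degq, hr₀deg]⟩
  · refine le_csInf ⟨κ * f.natDegree + 1, ?_⟩ ?_
    · exact ⟨_, hc₀mem, hc₀ne, by rw [wRT_mk hq hr₀ne hr₀degq, hr₀deg]⟩
    rintro w ⟨c, hcC, hcne, rfl⟩
    rw [wRT, if_neg hcne]
    have := hlow c hcC hcne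
    omega

end Core2
end Stmt14

/-- RT distances of the Type II, III and IV codes of
`K = R[x]/⟨x^{np^s} − α₀^{p^s}⟩`, where `f = x^n − α₀` is basic irreducible. -/
theorem stmt14 {R : Type} [CommRing R] [Finite R]
    (p m s n : ℕ) (hp : p.Prime) (hm : 0 < m) (hs : 0 < s) (hn : 0 < n)
    (hnp : Nat.gcd n p = 1)
    (γ : R) (hγ : γ ≠ 0) (hγ2 : γ ^ 2 = 0)
    (hmax : ∀ a : R, a ∈ Ideal.span {γ} ↔ ¬ IsUnit a)
    (hres : Nat.card (R ⧸ Ideal.span {γ}) = p ^ m)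
    (α₀ : R) (hα₀ : IsUnit α₀)
    (hirr : Irreducible ((X ^ n - C α₀ : R[X]).map (Ideal.Quotient.mk (Ideal.span {γ})))) :
    (∀ τ, τ < p ^ s →
      dRT (X ^ (n * p ^ s) - C (α₀ ^ p ^ s))
        (Ideal.span {Ideal.Quotient.mk
          (Ideal.span {(X ^ (n * p ^ s) - C (α₀ ^ p ^ s) : R[X])})
          (C γ * (X ^ n - C α₀) ^ τ)}) = n * τ + 1) ∧
    (∀ ω t : ℕ, ∀ G : R[X] ⧸ Ideal.span {(X ^ (n * p ^ s) - C (α₀ ^ p ^ s) : R[X])},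
      0 < ω → ω < p ^ s → (G = 0 ∨ IsUnit G) → (G ≠ 0 → t < ω) →
      ∀ κ : ℕ,
        IsLeast {k : ℕ |
          Ideal.Quotient.mk (Ideal.span {(X ^ (n * p ^ s) - C (α₀ ^ p ^ s) : R[X])}) (C γ) *
            (Ideal.Quotient.mk (Ideal.span {(X ^ (n * p ^ s) - C (α₀ ^ p ^ s) : R[X])})
              (X ^ n - C α₀)) ^ k ∈
          Ideal.span {Ideal.Quotient.mk
              (Ideal.span {(X ^ (n * p ^ s) - C (α₀ ^ p ^ s) : R[X])})
              ((X ^ n - C α₀) ^ ω) +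
            Ideal.Quotient.mk (Ideal.span {(X ^ (n * p ^ s) - C (α₀ ^ p ^ s) : R[X])})
              (C γ * (X ^ n - C α₀) ^ t) * G}} κ →
        dRT (X ^ (n * p ^ s) - C (α₀ ^ p ^ s))
          (Ideal.span {Ideal.Quotient.mk
              (Ideal.span {(X ^ (n * p ^ s) - C (α₀ ^ p ^ s) : R[X])})
              ((X ^ n - C α₀) ^ ω) +
            Ideal.Quotient.mk (Ideal.span {(X ^ (n * p ^ s) - C (α₀ ^ p ^ s) : R[X])})
              (C γ * (X ^ n - C α₀) ^ t) * G}) = n * κ + 1) ∧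
    (∀ ω t μ : ℕ, ∀ G : R[X] ⧸ Ideal.span {(X ^ (n * p ^ s) - C (α₀ ^ p ^ s) : R[X])},
      μ < ω → ω < p ^ s → (G = 0 ∨ IsUnit G) → (G ≠ 0 → t < μ) →
      ∀ κ : ℕ,
        IsLeast {k : ℕ |
          Ideal.Quotient.mk (Ideal.span {(X ^ (n * p ^ s) - C (α₀ ^ p ^ s) : R[X])}) (C γ) *
            (Ideal.Quotient.mk (Ideal.span {(X ^ (n * p ^ s) - C (α₀ ^ p ^ s) : R[X])})
              (X ^ n - C α₀)) ^ k ∈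
          Ideal.span {Ideal.Quotient.mk
              (Ideal.span {(X ^ (n * p ^ s) - C (α₀ ^ p ^ s) : R[X])})
              ((X ^ n - C α₀) ^ ω) +
            Ideal.Quotient.mk (Ideal.span {(X ^ (n * p ^ s) - C (α₀ ^ p ^ s) : R[X])})
              (C γ * (X ^ n - C α₀) ^ t) * G}} κ →
        μ < κ →
        dRT (X ^ (n * p ^ s) - C (α₀ ^ p ^ s))
          (Ideal.span {Ideal.Quotient.mk
              (Ideal.span {(X ^ (n * p ^ s) - C (α₀ ^ p ^ s) : R[X])})
              ((X ^ n - C α₀) ^ ω) +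
            Ideal.Quotient.mk (Ideal.span {(X ^ (n * p ^ s) - C (α₀ ^ p ^ s) : R[X])})
              (C γ * (X ^ n - C α₀) ^ t) * G,
            Ideal.Quotient.mk (Ideal.span {(X ^ (n * p ^ s) - C (α₀ ^ p ^ s) : R[X])})
              (C γ * (X ^ n - C α₀) ^ μ)}) = n * μ + 1) := by
  classical
  haveI : Nontrivial R := nontrivial_of_ne γ 0 hγ
  haveI : Fact p.Prime := ⟨hp⟩
  have hmaxI : (Ideal.span {γ}).IsMaximal := Stmt14.maximal hγ hγ2 hmax
  letI instF : Field (R ⧸ Ideal.span {γ}) := Ideal.Quotient.field _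
  have hsurj : Function.Surjective (Ideal.Quotient.mk (Ideal.span {γ}) : R →+* R ⧸ Ideal.span {γ}) :=
    Ideal.Quotient.mk_surjective
  have hker : ∀ a : R[X], a.map (Ideal.Quotient.mk (Ideal.span {γ})) = 0 ↔ C γ ∣ a :=
    fun a => Stmt14.map_eq_zero_iff γ a
  have hγker : ∀ a : R[X], C γ * a = 0 ↔ a.map (Ideal.Quotient.mk (Ideal.span {γ})) = 0 :=
    fun a => Stmt14.gamma_mul_eq_zero_iff hγ hγ2 hmax a
  have hchar : CharP (R ⧸ Ideal.span {γ}) p := Stmt14.charp p m hp hm hmax hres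
  have hfrob : (X ^ (n * p ^ s) - C (α₀ ^ p ^ s) : R[X]).map (Ideal.Quotient.mk (Ideal.span {γ}))
      = ((X ^ n - C α₀ : R[X]).map (Ideal.Quotient.mk (Ideal.span {γ}))) ^ (p ^ s) :=
    Stmt14.frob γ p s n hchar α₀
  have hNne : n * p ^ s ≠ 0 := Nat.mul_ne_zero hn.ne' (pow_pos hp.pos s).ne'
  have hq : (X ^ (n * p ^ s) - C (α₀ ^ p ^ s) : R[X]).Monic := monic_X_pow_sub_C _ hNne
  have hf : (X ^ n - C α₀ : R[X]).Monic := monic_X_pow_sub_C _ hn.ne'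
  have hfdeg : (X ^ n - C α₀ : R[X]).natDegree = n := natDegree_X_pow_sub_C
  refine ⟨?_, ?_, ?_⟩
  · -- case (a)
    intro τ hτ
    have hT := Stmt14.TId_span_gamma hsurj hker hγker hfrob hirr (le_of_lt hτ)
    have hm := Stmt14.master hsurj hker hγker hfrob hirr hq hf hτ hT
    rw [hm, hfdeg, Nat.mul_comm]
  · -- case (b)
    intro ω t G hω hωe hG htG κ hκ
    have hωmem : Ideal.Quotient.mk (Ideal.span {(X ^ (n * p ^ s) - C (α₀ ^ p ^ s) : R[X])}) (C γ) *
        (Ideal.Quotient.mk (Ideal.span {(X ^ (n * p ^ s) - C (α₀ ^ p ^ s) : R[X])})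
          (X ^ n - C α₀)) ^ ω ∈
        Ideal.span {Ideal.Quotient.mk
            (Ideal.span {(X ^ (n * p ^ s) - C (α₀ ^ p ^ s) : R[X])})
            ((X ^ n - C α₀) ^ ω) +
          Ideal.Quotient.mk (Ideal.span {(X ^ (n * p ^ s) - C (α₀ ^ p ^ s) : R[X])})
            (C γ * (X ^ n - C α₀) ^ t) * G} := by
      have h1 : Ideal.Quotient.mk (Ideal.span {(X ^ (n * p ^ s) - C (α₀ ^ p ^ s) : R[X])}) (C γ) *
          Ideal.Quotient.mk (Ideal.span {(X ^ (n * p ^ s) - C (α₀ ^ p ^ s) : R[X])})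
            (C γ * (X ^ n - C α₀) ^ t) = 0 := by
        rw [← map_mul,
          show (C γ : R[X]) * (C γ * (X ^ n - C α₀) ^ t)
            = (C γ * C γ) * (X ^ n - C α₀) ^ t from by ring,
          Stmt14.gamma_sq hker hγker, zero_mul, map_zero]
      have h2 : Ideal.Quotient.mk (Ideal.span {(X ^ (n * p ^ s) - C (α₀ ^ p ^ s) : R[X])}) (C γ) *
          (Ideal.Quotient.mk (Ideal.span {(X ^ (n * p ^ s) - C (α₀ ^ p ^ s) : R[X])})
            ((X ^ n - C α₀) ^ ω) +
          Ideal.Quotient.mk (Ideal.span {(X ^ (n * p ^ s) - C (α₀ ^ p ^ s) : R[X])})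
            (C γ * (X ^ n - C α₀) ^ t) * G)
          = Ideal.Quotient.mk (Ideal.span {(X ^ (n * p ^ s) - C (α₀ ^ p ^ s) : R[X])}) (C γ) *
            (Ideal.Quotient.mk (Ideal.span {(X ^ (n * p ^ s) - C (α₀ ^ p ^ s) : R[X])})
              (X ^ n - C α₀)) ^ ω := by
        rw [mul_add, ← mul_assoc, h1, zero_mul, add_zero]
        exact congrArg (HMul.hMul _) (map_pow _ (X ^ n - C α₀) ω)
      rw [← h2]
      exact Ideal.mul_mem_left _ _ (Ideal.mem_span_singleton_self _)
    have hκω : κ ≤ ω := hκ.2 hωmem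
    have hκe : κ < p ^ s := lt_of_le_of_lt hκω hωe
    have hT := Stmt14.TId_span_least hsurj hker hγker hfrob hirr hκ
    have hm := Stmt14.master hsurj hker hγker hfrob hirr hq hf hκe hT
    rw [hm, hfdeg, Nat.mul_comm]
  · -- case (c)
    intro ω t μ G hμω hωe hG htG κ hκ hμκ
    have hTg := Stmt14.TId_span_least hsurj hker hγker hfrob hirr hκ
    have hT := Stmt14.TId_span_pair hsurj hker hγker hfrob hirr hTg (le_of_lt hμκ)
    have hμe : μ < p ^ s := lt_trans hμω hωe
    have hm := Stmt14.master hsurj hker hγker hfrob hirr hq hf hμe hT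
    rw [hm, hfdeg, Nat.mul_comm]
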